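/- The Jacobian of the single-module M-MGN map g(x) = a + VᵀV x + s(Wx+b)·Wᵀσ(Wx+b), where s is convex, twice continuously differentiable, nonnegative and σ = ∇s, is positive semidefinite everywhere. -/

import Mathlib

open Matrix

-- expand a CLM on pi type over the standard basis
lemma clm_expand {m : ℕ} (T : (Fin m → ℝ) →L[ℝ] ℝ) (w : Fin m → ℝ) :
    T w = ∑ k, w k * T (Pi.single k 1) := by
  have hw : w = ∑ k, w k • (Pi.single k 1 : Fin m → ℝ) := by
    funext j
    simp [Finset.sum_apply, Pi.single_apply]
  conv_lhs => rw [hw]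
  rw [map_sum]
  simp [smul_eq_mul]

lemma deriv_nonneg_of_monotone {ψ : ℝ → ℝ} {d : ℝ} (hm : Monotone ψ)
    (h : HasDerivAt ψ d 0) : 0 ≤ d := by
  have h1 : Filter.Tendsto (slope ψ 0) (nhdsWithin 0 {(0:ℝ)}ᶜ) (nhds d) :=
    hasDerivAt_iff_tendsto_slope.mp h
  have h2 : Filter.Tendsto (slope ψ 0) (nhdsWithin 0 (Set.Ioi 0)) (nhds d) :=
    h1.mono_left (nhdsWithin_mono _ (fun t ht => ne_of_gt ht))
  refine ge_of_tendsto h2 ?_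
  filter_upwards [self_mem_nhdsWithin] with t ht
  have ht' : (0:ℝ) < t := ht
  rw [slope_def_field]
  exact div_nonneg (sub_nonneg.2 (hm ht'.le)) (by simpa using ht'.le)

lemma snd_deriv_nonneg {m : ℕ} {s : (Fin m → ℝ) → ℝ} (hconv : ConvexOn ℝ Set.univ s)
    (hC2 : ContDiff ℝ 2 s) (z w : Fin m → ℝ) :
    0 ≤ fderiv ℝ (fderiv ℝ s) z w w := by
  have hd1 : Differentiable ℝ s := hC2.differentiable two_ne_zero
  have hC1' : ContDiff ℝ 1 (fderiv ℝ s) := hC2.fderiv_right (by norm_num)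
  have hd2 : Differentiable ℝ (fderiv ℝ s) := hC1'.differentiable one_ne_zero
  set γ : ℝ → (Fin m → ℝ) := fun t => z + t • w with hγdef
  have hγ : ∀ t : ℝ, HasDerivAt γ w t := by
    intro t
    simpa [hγdef] using ((hasDerivAt_id t).smul_const w).const_add z
  set ψ : ℝ → ℝ := fun t => fderiv ℝ s (γ t) w with hψdef
  set φ : ℝ → ℝ := fun t => s (γ t) with hφdef
  have hφ' : ∀ t, HasDerivAt φ (ψ t) t := fun t =>
    (hd1 (γ t)).hasFDerivAt.comp_hasDerivAt t (hγ t)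
  have hψ' : ∀ t, HasDerivAt ψ (fderiv ℝ (fderiv ℝ s) (γ t) w w) t := by
    intro t
    have h1 : HasDerivAt (fun t => fderiv ℝ s (γ t)) (fderiv ℝ (fderiv ℝ s) (γ t) w) t :=
      (hd2 (γ t)).hasFDerivAt.comp_hasDerivAt t (hγ t)
    simpa using h1.clm_apply (hasDerivAt_const t w)
  have hφconv : ConvexOn ℝ Set.univ φ := by
    have := hconv.comp_affineMap (AffineMap.lineMap (z : Fin m → ℝ) (z + w))
    have heq : (s ∘ (AffineMap.lineMap (z : Fin m → ℝ) (z + w))) = φ := by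
      funext t
      have harg : (AffineMap.lineMap (z : Fin m → ℝ) (z + w)) t = γ t := by
        simp only [AffineMap.lineMap_apply, hγdef, vsub_eq_sub, vadd_eq_add]
        module
      simp [Function.comp, harg, hφdef]
    rw [heq] at this
    simpa using this
  have hψmono : Monotone ψ := by
    have hmono := hφconv.monotoneOn_deriv (fun t _ => (hφ' t).differentiableAt)
    intro t t' htt'
    have h1 := hmono (Set.mem_univ t) (Set.mem_univ t') htt'
    rwa [(hφ' t).deriv, (hφ' t').deriv] at h1
  have h0 := deriv_nonneg_of_monotone hψmono (hψ' 0)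
  simpa [hγdef] using h0

theorem stmt_12 {m n p : ℕ} (a : Fin n → ℝ) (V : Matrix (Fin p) (Fin n) ℝ)
    (W : Matrix (Fin m) (Fin n) ℝ) (b : Fin m → ℝ)
    (s : (Fin m → ℝ) → ℝ)
    (hconv : ConvexOn ℝ Set.univ s) (hC2 : ContDiff ℝ 2 s) (hnn : ∀ y, 0 ≤ s y) :
    let σ : (Fin m → ℝ) → (Fin m → ℝ) := fun y i => fderiv ℝ s y (Pi.single i 1)
    let g : (Fin n → ℝ) → (Fin n → ℝ) := fun y =>
      a + (V.transpose * V).mulVec y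
        + s (W.mulVec y + b) • W.transpose.mulVec (σ (W.mulVec y + b))
    ∀ x : Fin n → ℝ,
      (Matrix.of fun i j => fderiv ℝ g x (Pi.single j 1) i).PosSemidef := by
  intro σ g x
  classical
  set u : Fin m → ℝ := W.mulVec x + b with hu
  have hd1 : Differentiable ℝ s := hC2.differentiable two_ne_zero
  have hd2 : Differentiable ℝ (fderiv ℝ s) := (hC2.fderiv_right (by norm_num)).differentiable one_ne_zero
  set Wc : (Fin n → ℝ) →L[ℝ] (Fin m → ℝ) := (Matrix.mulVecLin W).toContinuousLinearMap with hWc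
  set WTc : (Fin m → ℝ) →L[ℝ] (Fin n → ℝ) :=
    (Matrix.mulVecLin W.transpose).toContinuousLinearMap with hWTc
  set Ac : (Fin n → ℝ) →L[ℝ] (Fin n → ℝ) :=
    (Matrix.mulVecLin (V.transpose * V)).toContinuousLinearMap with hAc
  set f'' : (Fin m → ℝ) →L[ℝ] ((Fin m → ℝ) →L[ℝ] ℝ) := fderiv ℝ (fderiv ℝ s) u with hf''
  set Kc : (Fin m → ℝ) →L[ℝ] (Fin m → ℝ) :=
    ContinuousLinearMap.pi
      (fun i => (ContinuousLinearMap.apply ℝ ℝ (Pi.single i 1)).comp f'') with hKc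
  set c : Fin n → ℝ := W.transpose.mulVec (σ u) with hc
  have hu' : HasFDerivAt (fun y : Fin n → ℝ => W.mulVec y + b) Wc x := by
    exact Wc.hasFDerivAt.add_const b
  have h1 : HasFDerivAt (fun y : Fin n → ℝ => s (W.mulVec y + b))
      ((fderiv ℝ s u).comp Wc) x := (hd1 u).hasFDerivAt.comp x hu'
  have h2 : HasFDerivAt (fun y : Fin n → ℝ => fderiv ℝ s (W.mulVec y + b))
      (f''.comp Wc) x := (hd2 u).hasFDerivAt.comp x hu'
  have h3 : HasFDerivAt (fun y : Fin n → ℝ => σ (W.mulVec y + b)) (Kc.comp Wc) x := by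
    refine hasFDerivAt_pi'' (fun i => ?_)
    have heq : (ContinuousLinearMap.proj (R := ℝ) (φ := fun _ : Fin m => ℝ) i).comp
        (Kc.comp Wc) = (ContinuousLinearMap.apply ℝ ℝ (Pi.single i 1)).comp (f''.comp Wc) := by
      ext v
      simp [hKc]
    rw [heq]
    exact ((ContinuousLinearMap.apply ℝ ℝ (Pi.single i 1)).hasFDerivAt.comp x h2 :)
  have h4 : HasFDerivAt (fun y : Fin n → ℝ => W.transpose.mulVec (σ (W.mulVec y + b)))
      (WTc.comp (Kc.comp Wc)) x := WTc.hasFDerivAt.comp x h3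
  have h5 := h1.smul h4
  have h6 : HasFDerivAt g
      (Ac + (s u • (WTc.comp (Kc.comp Wc)) + ((fderiv ℝ s u).comp Wc).smulRight
        (W.transpose.mulVec (σ u)))) x := by
    have := ((hasFDerivAt_const a x).add Ac.hasFDerivAt).add h5
    exact this.congr_fderiv (by rw [zero_add])
  have hfd : fderiv ℝ g x = Ac + (s u • (WTc.comp (Kc.comp Wc)) +
      ((fderiv ℝ s u).comp Wc).smulRight (W.transpose.mulVec (σ u))) := h6.fderiv
  have hsymm : ∀ v w' : Fin m → ℝ, f'' v w' = f'' w' v := fun v w' =>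
    second_derivative_symmetric (fun y => (hd1 y).hasFDerivAt) (hd2 u).hasFDerivAt v w'
  have hlin : ∀ j, fderiv ℝ s u (W.mulVec (Pi.single j 1)) = c j := by
    intro j
    rw [clm_expand]
    simp only [hc, Matrix.mulVec, dotProduct, Matrix.transpose_apply, Pi.single_apply,
      mul_ite, mul_one, mul_zero, Finset.sum_ite_eq', Finset.mem_univ, if_true]
    rfl
  have hentry : ∀ i j, fderiv ℝ g x (Pi.single j 1) i =
      (V.transpose * V) i j + c i * c j +
        s u * f'' (W.mulVec (Pi.single i 1)) (W.mulVec (Pi.single j 1)) := by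
    intro i j
    rw [hfd]
    simp only [ContinuousLinearMap.add_apply, ContinuousLinearMap.smul_apply,
      ContinuousLinearMap.coe_comp', Function.comp_apply, ContinuousLinearMap.smulRight_apply,
      Pi.add_apply, Pi.smul_apply, smul_eq_mul, hWc, hWTc, hAc, hKc,
      LinearMap.coe_toContinuousLinearMap', Matrix.mulVecLin_apply,
      ContinuousLinearMap.pi_apply, ContinuousLinearMap.apply_apply]
    rw [hlin j]
    have hterm : Wᵀ.mulVec (fun k => f'' (W.mulVec (Pi.single j 1)) (Pi.single k 1)) i =
        f'' (W.mulVec (Pi.single i 1)) (W.mulVec (Pi.single j 1)) := by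
      rw [hsymm, clm_expand]
      simp [Matrix.mulVec, dotProduct, Matrix.transpose_apply, Pi.single_apply,
        mul_ite, mul_one, mul_zero, Finset.sum_ite_eq', Finset.mem_univ, if_true]
    have hpi : (ContinuousLinearMap.pi fun k =>
        ((ContinuousLinearMap.apply ℝ ℝ) (Pi.single k 1)).comp f'') (W *ᵥ Pi.single j 1) =
        fun k => f'' (W *ᵥ Pi.single j 1) (Pi.single k 1) := by
      funext k
      simp
    rw [hpi, hterm, ← hc]
    simp only [Matrix.mulVec_single_one, Matrix.col, Matrix.transpose_apply]
    ring
  set M : Matrix (Fin n) (Fin n) ℝ :=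
    Matrix.of (fun i j => f'' (W.mulVec (Pi.single i 1)) (W.mulVec (Pi.single j 1))) with hM
  have hJ : (Matrix.of fun i j => fderiv ℝ g x (Pi.single j 1) i) =
      V.transpose * V + Matrix.vecMulVec c c + s u • M := by
    ext i j
    simp only [Matrix.of_apply, Matrix.add_apply, Matrix.smul_apply, Matrix.vecMulVec_apply,
      smul_eq_mul, hM]
    exact hentry i j
  rw [hJ]
  have p1 : (V.transpose * V).PosSemidef := by
    have hV : V.conjTranspose = V.transpose := by
      ext i j
      simp [Matrix.conjTranspose_apply]
    exact hV ▸ Matrix.posSemidef_conjTranspose_mul_self V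
  have p2 : (Matrix.vecMulVec c c).PosSemidef := by
    rw [Matrix.posSemidef_iff_dotProduct_mulVec]
    constructor
    · ext i j
      simp [Matrix.conjTranspose_apply, Matrix.vecMulVec_apply, mul_comm]
    · intro y
      have hmv : Matrix.vecMulVec c c *ᵥ y = (c ⬝ᵥ y) • c := by
        funext i
        simp only [Matrix.mulVec, Matrix.vecMulVec_apply, dotProduct, Pi.smul_apply,
          smul_eq_mul]
        rw [Finset.sum_mul]
        exact Finset.sum_congr rfl fun k _ => by ring
      rw [hmv]
      simp only [star_trivial, dotProduct_smul, smul_eq_mul]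
      rw [dotProduct_comm]
      exact mul_self_nonneg _
  have p3 : (s u • M).PosSemidef := by
    rw [Matrix.posSemidef_iff_dotProduct_mulVec]
    constructor
    · ext i j
      simp only [Matrix.conjTranspose_apply, Matrix.smul_apply, Matrix.of_apply, hM,
        star_trivial, smul_eq_mul]
      rw [hsymm]
    · intro y
      have hexp : W *ᵥ y = ∑ k, y k • (W *ᵥ Pi.single k 1) := by
        funext l
        simp [Matrix.mulVec_single, Matrix.mulVec, dotProduct, Finset.sum_apply,
          mul_comm]
      have h2exp : f'' (W *ᵥ y) (W *ᵥ y) =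
          ∑ i, ∑ j, y i * (y j * f'' (W *ᵥ Pi.single i 1) (W *ᵥ Pi.single j 1)) := by
        rw [hexp]
        simp only [map_sum, _root_.map_smul, ContinuousLinearMap.sum_apply,
          ContinuousLinearMap.smul_apply, ContinuousLinearMap.coe_sum', ContinuousLinearMap.coe_smul',
          Finset.sum_apply, Pi.smul_apply, smul_eq_mul, Finset.mul_sum]
        rw [Finset.sum_comm]
        exact Finset.sum_congr rfl fun i _ => Finset.sum_congr rfl fun j _ => by ring
      have lhs_eq : star y ⬝ᵥ ((s u • M) *ᵥ y) =
          s u * ∑ i, ∑ j, y i * (y j * f'' (W *ᵥ Pi.single i 1) (W *ᵥ Pi.single j 1)) := by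
        simp only [star_trivial, dotProduct, Matrix.mulVec, Matrix.smul_apply,
          Matrix.of_apply, smul_eq_mul, hM]
        rw [Finset.mul_sum]
        refine Finset.sum_congr rfl fun i _ => ?_
        rw [Finset.mul_sum, Finset.mul_sum]
        refine Finset.sum_congr rfl fun j _ => ?_
        ring
      rw [lhs_eq, ← h2exp]
      exact mul_nonneg (hnn u) (snd_deriv_nonneg hconv hC2 u (W *ᵥ y))
  exact (p1.add p2).add p3
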